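/- (Exact single-coordinate update for the elastic net.) Consider the elastic-net objective F(α) := (1/(2d))‖Aα − b‖₂² + λ·( (η/2)‖α‖₂² + (1−η)‖α‖₁ ) with λ > 0, η ∈ [0,1], and suppose column a_j ≠ 0 or λη > 0. Fix α ∈ ℝⁿ, let ṽ := Aα − b, and define τ := λd(1−η)/(‖a_j‖₂² + ληd) and γ := (α_j‖a_j‖₂² − a_jᵀṽ)/(‖a_j‖₂² + ληd). Then the unique minimizer of x ↦ F(α + e_j(x − α_j)) over x ∈ ℝ (i.e., minimizing F over the j-th coordinate with all other coordinates fixed) is x* = sign(γ)·max(|γ| − τ, 0). -/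

import Mathlib

/-!
STATEMENT 13: exact single-coordinate update for the elastic net.  For
`F(α) := (1/(2d))‖Aα − b‖² + λ((η/2)‖α‖² + (1−η)‖α‖₁)`, the unique minimizer of `F` over
the `j`-th coordinate (all the other coordinates being fixed) is the soft-thresholded
value `x* = sign(γ)·[|γ| − τ]₊` with
`τ := λd(1−η)/(‖aⱼ‖² + ληd)` and `γ := (αⱼ‖aⱼ‖² − aⱼᵀṽ)/(‖aⱼ‖² + ληd)`, `ṽ := Aα − b`.
-/

open Finset

noncomputable section

/-- The elastic-net objective `F(α) = (1/(2d))‖Aα − b‖₂² + λ(η/2 ‖α‖₂² + (1−η)‖α‖₁)`. -/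
def elasticNet {d n : ℕ} (A : Matrix (Fin d) (Fin n) ℝ) (b : Fin d → ℝ)
    (lam eta : ℝ) (α : Fin n → ℝ) : ℝ :=
  1 / (2 * (d : ℝ)) * ∑ k, (∑ i, A k i * α i - b k) ^ 2 +
    lam * (eta / 2 * ∑ i, (α i) ^ 2 + (1 - eta) * ∑ i, |α i|)

private lemma soft_min (q τ γ L : ℝ) (hq : 0 < q) (hτ : 0 ≤ τ) (hL : L = q * τ)
    (xs : ℝ) (hxs : xs = Real.sign γ * max (|γ| - τ) 0)
    (x : ℝ) (hne : x ≠ xs) :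
    q/2*xs^2 - q*γ*xs + L*|xs| < q/2*x^2 - q*γ*x + L*|x| := by
  have hsq : 0 < (x - xs)^2 := by
    have h1 : 0 < |x - xs| := abs_pos.mpr (sub_ne_zero.mpr hne)
    nlinarith [sq_abs (x - xs)]
  rcases le_or_gt |γ| τ with hle | hgt
  · have hxs0 : xs = 0 := by
      rw [hxs, max_eq_right (by linarith), mul_zero]
    rw [hxs0] at hsq ⊢
    have h2 : γ * x ≤ τ * |x| := by
      calc γ * x ≤ |γ * x| := le_abs_self _
        _ = |γ| * |x| := abs_mul _ _
        _ ≤ τ * |x| := mul_le_mul_of_nonneg_right hle (abs_nonneg x)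
    have h3 : q * (γ * x) ≤ q * (τ * |x|) := mul_le_mul_of_nonneg_left h2 hq.le
    simp only [abs_zero]
    rw [hL]
    nlinarith
  · rcases lt_trichotomy γ 0 with hγ | hγ | hγ
    · have hγa : |γ| = -γ := abs_of_neg hγ
      have hxsv : xs = γ + τ := by
        rw [hxs, Real.sign_of_neg hγ, hγa, max_eq_left (by linarith)]; ring
      have haxs : |xs| = -xs := abs_of_neg (by rw [hxsv]; rw [hγa] at hgt; linarith)
      have hid : (q/2*x^2 - q*γ*x + L*|x|) - (q/2*xs^2 - q*γ*xs + L*|xs|)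
          = q/2*(x - xs)^2 + q*τ*(|x| + x) := by
        rw [haxs, hxsv, hL]; ring
      have h4 : 0 ≤ q*τ*(|x| + x) := by
        have := neg_abs_le x
        have : 0 ≤ |x| + x := by linarith
        positivity
      nlinarith
    · simp [hγ] at hgt; linarith
    · have hγa : |γ| = γ := abs_of_pos hγ
      have hxsv : xs = γ - τ := by
        rw [hxs, Real.sign_of_pos hγ, hγa, max_eq_left (by linarith)]; ring
      have haxs : |xs| = xs := abs_of_pos (by rw [hxsv]; rw [hγa] at hgt; linarith)
      have hid : (q/2*x^2 - q*γ*x + L*|x|) - (q/2*xs^2 - q*γ*xs + L*|xs|)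
          = q/2*(x - xs)^2 + q*τ*(|x| - x) := by
        rw [haxs, hxsv, hL]; ring
      have h4 : 0 ≤ q*τ*(|x| - x) := by
        have := le_abs_self x
        have : 0 ≤ |x| - x := by linarith
        positivity
      nlinarith

private lemma sum_upd {n : ℕ} (j : Fin n) (f : Fin n → ℝ) (c : ℝ) :
    ∑ i, Function.update f j c i = (∑ i, f i) + (c - f j) := by
  have h : Function.update f j c = fun i => f i + (if i = j then c - f j else 0) := by
    ext i
    rcases eq_or_ne i j with rfl | h
    · simp
    · simp [Function.update_of_ne h, h]
  rw [h]
  simp [Finset.sum_add_distrib, Finset.sum_ite_eq' Finset.univ j]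

private lemma expand_lemma {d n : ℕ} (hd : 0 < d)
    (A : Matrix (Fin d) (Fin n) ℝ) (b : Fin d → ℝ)
    (lam eta : ℝ) (j : Fin n) (α : Fin n → ℝ) (y : ℝ) :
    elasticNet A b lam eta (Function.update α j y) =
      ((∑ k, (A k j)^2) / (2*(d:ℝ)) + lam*eta/2) * y^2
      + (((∑ k, A k j * ((∑ i, A k i * α i) - b k)) - (∑ k, (A k j)^2) * α j) / (d:ℝ)) * y
      + (lam*(1-eta)) * |y|
      + ( (∑ k, ((∑ i, A k i * α i) - b k)^2) / (2*(d:ℝ))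
          - (∑ k, A k j * ((∑ i, A k i * α i) - b k)) * α j / (d:ℝ)
          + (∑ k, (A k j)^2) * (α j)^2 / (2*(d:ℝ))
          + lam*eta/2 * ((∑ i, (α i)^2) - (α j)^2)
          + lam*(1-eta) * ((∑ i, |α i|) - |α j|) ) := by
  have hd' : (d:ℝ) ≠ 0 := by positivity
  unfold elasticNet
  -- rewrite the three inner sums
  have h1 : ∀ k, ∑ i, A k i * Function.update α j y i
      = (∑ i, A k i * α i) + A k j * (y - α j) := by
    intro k
    have : (fun i => A k i * Function.update α j y i)
        = Function.update (fun i => A k i * α i) j (A k j * y) := by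
      ext i
      rcases eq_or_ne i j with rfl | h
      · simp
      · simp [Function.update_of_ne h]
    rw [show (∑ i, A k i * Function.update α j y i)
        = ∑ i, Function.update (fun i => A k i * α i) j (A k j * y) i from
        Finset.sum_congr rfl (fun i _ => congrFun this i), sum_upd]
    ring
  have h2 : ∑ i, (Function.update α j y i)^2 = (∑ i, (α i)^2) + (y^2 - (α j)^2) := by
    rw [show (∑ i, (Function.update α j y i)^2)
        = ∑ i, Function.update (fun i => (α i)^2) j (y^2) i from
        Finset.sum_congr rfl (fun i _ => by
          rcases eq_or_ne i j with rfl | h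
          · simp
          · simp [Function.update_of_ne h]), sum_upd]
  have h3 : ∑ i, |Function.update α j y i| = (∑ i, |α i|) + (|y| - |α j|) := by
    rw [show (∑ i, |Function.update α j y i|)
        = ∑ i, Function.update (fun i => |α i|) j (|y|) i from
        Finset.sum_congr rfl (fun i _ => by
          rcases eq_or_ne i j with rfl | h
          · simp
          · simp [Function.update_of_ne h]), sum_upd]
  simp only [h2, h3]
  have h4 : ∑ k, (∑ i, A k i * Function.update α j y i - b k)^2
      = (∑ k, ((∑ i, A k i * α i) - b k)^2)
        + 2*(y - α j)*(∑ k, A k j * ((∑ i, A k i * α i) - b k))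
        + (y - α j)^2 * (∑ k, (A k j)^2) := by
    have : ∀ k, (∑ i, A k i * Function.update α j y i - b k)^2
        = ((∑ i, A k i * α i) - b k)^2
          + 2*(y - α j)*(A k j * ((∑ i, A k i * α i) - b k))
          + (y - α j)^2 * (A k j)^2 := by
      intro k; rw [h1 k]; ring
    rw [Finset.sum_congr rfl (fun k _ => this k)]
    simp [Finset.sum_add_distrib, ← Finset.mul_sum]
  rw [h4]
  field_simp
  ring


theorem stmt_13
    {d n : ℕ} (hd : 0 < d)
    (A : Matrix (Fin d) (Fin n) ℝ) (b : Fin d → ℝ)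
    (lam eta : ℝ) (hlam : 0 < lam) (heta : eta ∈ Set.Icc (0 : ℝ) 1)
    (j : Fin n)
    -- `aⱼ ≠ 0` or `λη > 0` (so that the one-dimensional problem is strictly convex)
    (hj : (∃ k, A k j ≠ 0) ∨ 0 < lam * eta)
    (α : Fin n → ℝ)
    -- `τ` and `γ` (with `ṽ := Aα − b`)
    (τ γ : ℝ)
    (hτ : τ = lam * (d : ℝ) * (1 - eta) / ((∑ k, (A k j) ^ 2) + lam * eta * (d : ℝ)))
    (hγ : γ = (α j * (∑ k, (A k j) ^ 2) -
          ∑ k, A k j * (∑ i, A k i * α i - b k)) /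
        ((∑ k, (A k j) ^ 2) + lam * eta * (d : ℝ)))
    (xstar : ℝ) (hx : xstar = Real.sign γ * max (|γ| - τ) 0) :
    ∀ x : ℝ, x ≠ xstar →
      elasticNet A b lam eta (Function.update α j xstar) <
        elasticNet A b lam eta (Function.update α j x) := by
  obtain ⟨heta0, heta1⟩ := heta
  have hd' : (0:ℝ) < d := by exact_mod_cast hd
  set S := ∑ k, (A k j)^2 with hS
  set T := ∑ k, A k j * ((∑ i, A k i * α i) - b k) with hT
  have hSnn : 0 ≤ S := Finset.sum_nonneg (fun k _ => sq_nonneg _)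
  have hq : 0 < S / (d:ℝ) + lam * eta := by
    rcases hj with ⟨k, hk⟩ | hpos
    · have hSpos : 0 < S := Finset.sum_pos' (fun k _ => sq_nonneg _)
        ⟨k, Finset.mem_univ k, by positivity⟩
      have : 0 < S / (d:ℝ) := div_pos hSpos hd'
      nlinarith [mul_nonneg hlam.le heta0]
    · have : 0 < S / (d:ℝ) + 0 ∨ True := Or.inr trivial
      nlinarith [div_nonneg hSnn hd'.le]
  set q := S / (d:ℝ) + lam * eta with hqdef
  set L := lam * (1 - eta) with hLdef
  have hLnn : 0 ≤ L := mul_nonneg hlam.le (by linarith)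
  have hden : S + lam * eta * (d:ℝ) = (d:ℝ) * q := by
    rw [hqdef]; field_simp
  have hdenpos : 0 < S + lam * eta * (d:ℝ) := by rw [hden]; positivity
  have hτ' : τ = L / q := by
    rw [hτ, hden, hLdef]
    rw [div_eq_div_iff (by positivity) (ne_of_gt hq)]
    ring
  have hτnn : 0 ≤ τ := by rw [hτ']; positivity
  have hL : L = q * τ := by rw [hτ']; field_simp
  have hqγ : q * γ = (α j * S - T) / (d:ℝ) := by
    rw [hγ, hden]
    have hq0 : q ≠ 0 := ne_of_gt hq
    have hd0 : (d:ℝ) ≠ 0 := ne_of_gt hd'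
    field_simp
  intro x hne
  rw [expand_lemma hd A b lam eta j α x, expand_lemma hd A b lam eta j α xstar]
  have key := soft_min q τ γ L hq hτnn hL xstar hx x hne
  have hc1 : S / (2*(d:ℝ)) + lam*eta/2 = q/2 := by rw [hqdef]; field_simp
  have hc2 : (T - S * α j) / (d:ℝ) = -(q*γ) := by rw [hqγ]; field_simp; ring
  rw [← hS, ← hT, hc1, hc2, ← hLdef]
  linarith

end
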